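/- Let f: ℝᵐ → ℝ be convex and coordinatewise nondecreasing, and let g₁,...,g_m: ℝⁿ → ℝ with each gᵢ being μᵢ-strongly convex. If every partial subgradient of f is bounded below by bᵢ > 0 in coordinate i on the relevant domain, then the composition F(x) = f(g₁(x),...,g_m(x)) is (∑ᵢ bᵢμᵢ)-strongly convex. -/

import Mathlib

lemma step_lemma {m : ℕ} (f : (Fin m → ℝ) → ℝ) (b : Fin m → ℝ)
    (hflow : ∀ u : Fin m → ℝ, ∀ i, ∀ δ : ℝ, 0 ≤ δ →
      f (Function.update u i (u i + δ)) ≥ f u + b i * δ)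
    (w : Fin m → ℝ) (hw : ∀ i, 0 ≤ w i) :
    ∀ s : Finset (Fin m), ∀ u : Fin m → ℝ,
      f (fun i => u i + if i ∈ s then w i else 0) ≥ f u + ∑ i ∈ s, b i * w i := by
  intro s
  induction s using Finset.induction with
  | empty => intro u; simp
  | @insert j s hj ih =>
    intro u
    have key : (fun i => u i + if i ∈ insert j s then w i else 0) =
        Function.update (fun i => u i + if i ∈ s then w i else 0) j
          ((fun i => u i + if i ∈ s then w i else 0) j + w j) := by
      funext i
      by_cases hij : i = j
      · subst hij
        simp [Function.update_self, hj]
      · simp [Function.update_of_ne hij, hij]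
    rw [key, Finset.sum_insert hj]
    calc f (Function.update (fun i => u i + if i ∈ s then w i else 0) j
          ((fun i => u i + if i ∈ s then w i else 0) j + w j))
        ≥ f (fun i => u i + if i ∈ s then w i else 0) + b j * w j :=
          hflow _ j (w j) (hw j)
      _ ≥ (f u + ∑ i ∈ s, b i * w i) + b j * w j := by linarith [ih u]
      _ = f u + (b j * w j + ∑ i ∈ s, b i * w i) := by ring

theorem stmt_17 {n m : ℕ} (f : (Fin m → ℝ) → ℝ) (g : Fin m → EuclideanSpace ℝ (Fin n) → ℝ)
    (μ b : Fin m → ℝ) (hμ : ∀ i, 0 < μ i) (hb : ∀ i, 0 < b i)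
    (hfconv : ConvexOn ℝ Set.univ f)
    (hfmono : ∀ u v : Fin m → ℝ, (∀ i, u i ≤ v i) → f u ≤ f v)
    (hflow : ∀ u : Fin m → ℝ, ∀ i, ∀ δ : ℝ, 0 ≤ δ →
      f (Function.update u i (u i + δ)) ≥ f u + b i * δ)
    (hgsc : ∀ i, ∀ x y : EuclideanSpace ℝ (Fin n), ∀ l : ℝ, 0 ≤ l → l ≤ 1 →
      l * g i x + (1 - l) * g i y ≥
        g i (l • x + (1 - l) • y) + μ i / 2 * (l * (1 - l)) * ‖x - y‖ ^ 2) :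
    ∀ x y : EuclideanSpace ℝ (Fin n), ∀ l : ℝ, 0 ≤ l → l ≤ 1 →
      l * f (fun i => g i x) + (1 - l) * f (fun i => g i y) ≥
        f (fun i => g i (l • x + (1 - l) • y)) +
          (∑ i, b i * μ i) / 2 * (l * (1 - l)) * ‖x - y‖ ^ 2 := by
  intro x y l hl0 hl1
  set z := l • x + (1 - l) • y with hz
  set c := l * (1 - l) * ‖x - y‖ ^ 2 / 2 with hc
  have hc0 : 0 ≤ c := by
    have : 0 ≤ l * (1 - l) := mul_nonneg hl0 (by linarith)
    positivity
  set w : Fin m → ℝ := fun i => μ i * c with hwdef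
  have hw : ∀ i, 0 ≤ w i := fun i => mul_nonneg (hμ i).le hc0
  -- convexity of f
  have h1 : l * f (fun i => g i x) + (1 - l) * f (fun i => g i y) ≥
      f (fun i => l * g i x + (1 - l) * g i y) := by
    have := hfconv.2 (Set.mem_univ (fun i => g i x)) (Set.mem_univ (fun i => g i y))
      hl0 (by linarith : (0:ℝ) ≤ 1 - l) (by ring)
    have e : ((l • fun i => g i x) + (1 - l) • fun i => g i y) =
        (fun i => l * g i x + (1 - l) * g i y) := by
      funext i; simp
    rw [e] at this; exact this
  -- monotonicity + strong convexity of each g i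
  have h2 : f (fun i => l * g i x + (1 - l) * g i y) ≥
      f (fun i => g i z + if i ∈ (Finset.univ : Finset (Fin m)) then w i else 0) := by
    apply hfmono
    intro i
    have := hgsc i x y l hl0 hl1
    simp only [Finset.mem_univ, if_true, hwdef]
    have : g i z + μ i / 2 * (l * (1 - l)) * ‖x - y‖ ^ 2 ≤
        l * g i x + (1 - l) * g i y := this
    have heq : μ i * c = μ i / 2 * (l * (1 - l)) * ‖x - y‖ ^ 2 := by
      rw [hc]; ring
    linarith [heq ▸ this]
  -- step lemma
  have h3 : f (fun i => g i z + if i ∈ (Finset.univ : Finset (Fin m)) then w i else 0) ≥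
      f (fun i => g i z) + ∑ i, b i * w i :=
    step_lemma f b hflow w hw Finset.univ (fun i => g i z)
  have hsum : ∑ i, b i * w i = (∑ i, b i * μ i) / 2 * (l * (1 - l)) * ‖x - y‖ ^ 2 := by
    have h : ∑ i, b i * w i = (∑ i, b i * μ i) * c := by
      rw [Finset.sum_mul]
      exact Finset.sum_congr rfl fun i _ => by simp only [hwdef]; ring
    rw [h, hc]; ring
  linarith [h1, h2, hsum ▸ h3]
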